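/- Let (X,d) be a geometrically doubling metric space, γ a Borel measure on X with 0 < γ(B) < ∞ for every ball B, and m : X → (0,∞) an admissibility function satisfying condition (A). Fix α > 0 and define the α-local maximal operator M_α u(x) = sup{ γ(B)^{-1} ∫_B |u| dγ : B an α-admissible ball with x ∈ B } (with M_α u(x) = 0 if no α-admissible ball contains x). Then there exists a constant C ≥ 1, depending only on α, the geometric doubling constant, and the constants in condition (A), such that for every u ∈ L¹(γ) and every λ > 0, γ({x ∈ X : M_α u(x) > λ}) ≤ (C/λ)·‖u‖_{L¹(γ)}. -/

import Mathlib

open MeasureTheory Metric ENNReal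

/-- The `α`-local maximal operator: supremum of averages of `|u|` over
`α`-admissible balls containing `x` (zero if there is no such ball). -/
noncomputable def locMax {X : Type*} [PseudoMetricSpace X] [MeasurableSpace X]
    (γ : Measure X) (m : X → ℝ) (α : ℝ) (u : X → ℝ) (x : X) : ℝ≥0∞ :=
  ⨆ (c : X) (r : ℝ) (_ : 0 < r) (_ : r ≤ α * m c) (_ : x ∈ ball c r),
    (γ (ball c r))⁻¹ * ∫⁻ z in ball c r, (‖u z‖₊ : ℝ≥0∞) ∂γ

theorem stmt18 {X : Type*} [MetricSpace X] [MeasurableSpace X] [BorelSpace X]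
    (N : ℕ)
    (hN : ∀ (x : X) (r : ℝ) (S : Finset X),
      (∀ y ∈ S, ball y (r / 2) ⊆ ball x r) →
      ((S : Set X).Pairwise fun a b => Disjoint (ball a (r / 2)) (ball b (r / 2))) →
      S.card ≤ N)
    (γ : Measure X)
    (hγ : ∀ (c : X) (r : ℝ), 0 < r → 0 < γ (ball c r) ∧ γ (ball c r) < ⊤)
    (m : X → ℝ) (hm : ∀ x, 0 < m x)
    (hA : ∀ a : ℝ, 0 < a → ∃ C : ℝ, 1 ≤ C ∧ ∀ (c : X) (r : ℝ), 0 < r → r ≤ a * m c →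
      γ (ball c (2 * r)) ≤ ENNReal.ofReal C * γ (ball c r))
    (α : ℝ) (hα : 0 < α) :
    ∃ C : ℝ, 1 ≤ C ∧ ∀ u : X → ℝ, Integrable u γ → ∀ lam : ℝ, 0 < lam →
      γ {x : X | ENNReal.ofReal lam < locMax γ m α u x} ≤
        (ENNReal.ofReal C / ENNReal.ofReal lam) * ∫⁻ z, (‖u z‖₊ : ℝ≥0∞) ∂γ := by
  obtain ⟨C, hC1, hC⟩ := hA (4 * α) (by positivity)
  have hC0 : (0:ℝ) ≤ C := le_trans zero_le_one hC1
  -- doubling twice: γ(B(c,4r)) ≤ C² γ(B(c,r)) for α-admissible balls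
  have hdbl : ∀ (c : X) (r : ℝ), 0 < r → r ≤ α * m c →
      γ (ball c (4 * r)) ≤ ENNReal.ofReal (C ^ 2) * γ (ball c r) := by
    intro c r hr hrm
    have h1 : γ (ball c (2 * r)) ≤ ENNReal.ofReal C * γ (ball c r) := by
      apply hC c r hr
      nlinarith [hm c, hα.le]
    have h2 : γ (ball c (2 * (2 * r))) ≤ ENNReal.ofReal C * γ (ball c (2 * r)) := by
      apply hC c (2 * r) (by linarith)
      nlinarith [hm c, hα.le]
    calc γ (ball c (4 * r)) = γ (ball c (2 * (2 * r))) := by ring_nf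
      _ ≤ ENNReal.ofReal C * γ (ball c (2 * r)) := h2
      _ ≤ ENNReal.ofReal C * (ENNReal.ofReal C * γ (ball c r)) :=
          mul_le_mul_right h1 _
      _ = ENNReal.ofReal (C ^ 2) * γ (ball c r) := by
          rw [← mul_assoc, ← ENNReal.ofReal_mul hC0, sq]
  refine ⟨C ^ 2, by nlinarith, ?_⟩
  intro u hu lam hlam
  set I := ∫⁻ z, (‖u z‖₊ : ℝ≥0∞) ∂γ with hI
  have hIlt : I < ⊤ := hu.2
  set ν : Measure X := γ.withDensity (fun z => (‖u z‖₊ : ℝ≥0∞)) with hν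
  have hνball : ∀ (c : X) (r : ℝ), ν (ball c r) = ∫⁻ z in ball c r, (‖u z‖₊ : ℝ≥0∞) ∂γ := by
    intro c r
    rw [hν, withDensity_apply _ measurableSet_ball]
  have hνuniv : ν Set.univ = I := by
    rw [hν, withDensity_apply _ MeasurableSet.univ, Measure.restrict_univ]
  haveI : IsFiniteMeasure ν := ⟨by rw [hνuniv]; exact hIlt⟩
  -- the truncated level sets
  set E : ℕ → Set X := fun n => {x | ∃ c : X, ∃ r : ℝ, 0 < r ∧ r ≤ α * m c ∧ r ≤ n ∧
      x ∈ ball c r ∧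
      ENNReal.ofReal lam < (γ (ball c r))⁻¹ * ∫⁻ z in ball c r, (‖u z‖₊ : ℝ≥0∞) ∂γ} with hE
  have hsub : {x : X | ENNReal.ofReal lam < locMax γ m α u x} ⊆ ⋃ n, E n := by
    intro x hx
    simp only [Set.mem_setOf_eq, locMax, lt_iSup_iff] at hx
    obtain ⟨c, r, hr, hrm, hxr, hlt⟩ := hx
    exact Set.mem_iUnion.2 ⟨⌈r⌉₊, c, r, hr, hrm, Nat.le_ceil r, hxr, hlt⟩
  have hmono : Monotone E := by
    intro a b hab x hx
    obtain ⟨c, r, h1, h2, h3, h4, h5⟩ := hx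
    exact ⟨c, r, h1, h2, h3.trans (by exact_mod_cast hab), h4, h5⟩
  -- key estimate for each `n`
  have key : ∀ n : ℕ, γ (E n) ≤
      (ENNReal.ofReal (C ^ 2) / ENNReal.ofReal lam) * I := by
    intro n
    set t : Set (X × ℝ) := {p | 0 < p.2 ∧ p.2 ≤ α * m p.1 ∧ p.2 ≤ n ∧
        ENNReal.ofReal lam < (γ (ball p.1 p.2))⁻¹ *
          ∫⁻ z in ball p.1 p.2, (‖u z‖₊ : ℝ≥0∞) ∂γ} with ht
    obtain ⟨v, hvt, hvd, hvcov⟩ :=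
      Vitali.exists_disjoint_subfamily_covering_enlargement
        (fun p : X × ℝ => ball p.1 p.2) t (fun p => p.2) (3/2) (by norm_num)
        (fun p hp => hp.1.le) n (fun p hp => hp.2.2.1)
        (fun p hp => ⟨p.1, mem_ball_self hp.1⟩)
    -- each ball in `v` carries positive ν-measure and λ·γB ≤ νB
    have hballs : ∀ p ∈ v, ENNReal.ofReal lam * γ (ball p.1 p.2) ≤ ν (ball p.1 p.2) := by
      intro p hp
      have hpt := hvt hp
      obtain ⟨h1, h2, h3, h4⟩ := hpt
      have hγp := hγ p.1 p.2 h1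
      rw [hνball]
      calc ENNReal.ofReal lam * γ (ball p.1 p.2)
          ≤ ((γ (ball p.1 p.2))⁻¹ * ∫⁻ z in ball p.1 p.2, (‖u z‖₊ : ℝ≥0∞) ∂γ) *
            γ (ball p.1 p.2) := mul_le_mul_left h4.le _
        _ = ∫⁻ z in ball p.1 p.2, (‖u z‖₊ : ℝ≥0∞) ∂γ := by
            rw [mul_comm ((γ (ball p.1 p.2))⁻¹) _, mul_assoc,
              ENNReal.inv_mul_cancel hγp.1.ne' hγp.2.ne, mul_one]
    -- v is countable
    have hvc : v.Countable := by
      have hcnt : Set.Countable {p : v | 0 < ν (ball (p : X × ℝ).1 (p : X × ℝ).2)} := by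
        apply Measure.countable_meas_pos_of_disjoint_iUnion
          (As := fun p : v => ball (p : X × ℝ).1 (p : X × ℝ).2)
        · exact fun _ => measurableSet_ball
        · intro a b hab
          exact hvd a.2 b.2 (fun h => hab (Subtype.ext h))
      have : {p : v | 0 < ν (ball (p : X × ℝ).1 (p : X × ℝ).2)} = Set.univ := by
        ext p
        simp only [Set.mem_setOf_eq, Set.mem_univ, iff_true]
        have hpt := hvt p.2
        obtain ⟨h1, h2, h3, h4⟩ := hpt
        have hγp := hγ (p : X × ℝ).1 (p : X × ℝ).2 h1
        have := hballs p p.2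
        have hpos : 0 < ENNReal.ofReal lam * γ (ball (p : X × ℝ).1 (p : X × ℝ).2) :=
          ENNReal.mul_pos (ENNReal.ofReal_pos.2 hlam).ne' hγp.1.ne'
        exact lt_of_lt_of_le hpos this
      rw [this] at hcnt
      have := hcnt.image (Subtype.val)
      simpa using this
    -- covering
    have hcov : E n ⊆ ⋃ p ∈ v, ball p.1 (4 * p.2) := by
      intro x hx
      obtain ⟨c, r, h1, h2, h3, h4, h5⟩ := hx
      obtain ⟨q, hqv, hqint, hqr⟩ := hvcov (c, r) ⟨h1, h2, h3, h5⟩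
      obtain ⟨y, hy1, hy2⟩ := hqint
      refine Set.mem_biUnion hqv ?_
      have hq2 : 0 < q.2 := (hvt hqv).1
      simp only [mem_ball] at h4 hy1 hy2 ⊢
      have hcy : dist c y < r := by rw [dist_comm]; exact hy1
      calc dist x q.1 ≤ dist x c + dist c y + dist y q.1 := dist_triangle4 x c y q.1
        _ < r + r + q.2 := add_lt_add (add_lt_add h4 hcy) hy2
        _ ≤ (3/2) * q.2 + (3/2) * q.2 + q.2 := by gcongr <;> linarith
        _ = 4 * q.2 := by ring
    -- put it together
    have hγlt : ∀ p ∈ v, γ (ball p.1 p.2) ≤ (ENNReal.ofReal lam)⁻¹ * ν (ball p.1 p.2) := by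
      intro p hp
      rw [← ENNReal.div_eq_inv_mul]
      rw [ENNReal.le_div_iff_mul_le (Or.inl (ENNReal.ofReal_pos.2 hlam).ne')
        (Or.inl ENNReal.ofReal_ne_top), mul_comm]
      exact hballs p hp
    calc γ (E n) ≤ γ (⋃ p ∈ v, ball p.1 (4 * p.2)) := measure_mono hcov
      _ ≤ ∑' p : v, γ (ball (p : X × ℝ).1 (4 * (p : X × ℝ).2)) := measure_biUnion_le γ hvc _
      _ ≤ ∑' p : v, ENNReal.ofReal (C ^ 2) * ((ENNReal.ofReal lam)⁻¹ *
            ν (ball (p : X × ℝ).1 (p : X × ℝ).2)) := by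
          apply ENNReal.tsum_le_tsum
          intro p
          have hpt := hvt p.2
          calc γ (ball (p : X × ℝ).1 (4 * (p : X × ℝ).2))
              ≤ ENNReal.ofReal (C ^ 2) * γ (ball (p : X × ℝ).1 (p : X × ℝ).2) :=
                hdbl _ _ hpt.1 hpt.2.1
            _ ≤ ENNReal.ofReal (C ^ 2) * ((ENNReal.ofReal lam)⁻¹ *
                ν (ball (p : X × ℝ).1 (p : X × ℝ).2)) :=
                mul_le_mul_right (hγlt p p.2) _
      _ = ENNReal.ofReal (C ^ 2) * (ENNReal.ofReal lam)⁻¹ *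
            ∑' p : v, ν (ball (p : X × ℝ).1 (p : X × ℝ).2) := by
          rw [ENNReal.tsum_mul_left, ENNReal.tsum_mul_left, mul_assoc]
      _ ≤ ENNReal.ofReal (C ^ 2) * (ENNReal.ofReal lam)⁻¹ * I := by
          apply mul_le_mul_right
          rw [← measure_biUnion hvc hvd (fun p _ => measurableSet_ball), ← hνuniv]
          exact measure_mono (Set.subset_univ _)
      _ = (ENNReal.ofReal (C ^ 2) / ENNReal.ofReal lam) * I := by
          rw [ENNReal.div_eq_inv_mul, mul_comm (ENNReal.ofReal lam)⁻¹ _]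
  calc γ {x : X | ENNReal.ofReal lam < locMax γ m α u x}
      ≤ γ (⋃ n, E n) := measure_mono hsub
    _ = ⨆ n, γ (E n) := hmono.measure_iUnion
    _ ≤ (ENNReal.ofReal (C ^ 2) / ENNReal.ofReal lam) * I := iSup_le key
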